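/- Suppose 1 < p ≤ 2, X is a Banach space and T : L_p → X is a gentle-narrow bounded linear operator with p-gentle function φ. Then for every ε > 0, every M > 0 and every measurable A ⊆ [0,1] there exists x ∈ L_p vanishing a.e. outside A such that: (i) ‖x‖_p = μ(A)^{1/p}; (ii) ‖x − x^M‖_p ≤ φ(M)·μ(A)^{1/p}; (iii) ‖Tx‖ ≤ ε; and additionally (iv) ∫_{[0,1]} x dμ = 0. -/

import Mathlib

open MeasureTheory Set Filter Topology
open scoped ENNReal NNReal

/-- Lebesgue measure on `[0,1]`. -/
noncomputable def μ01 : Measure ℝ := volume.restrict (Set.Icc 0 1)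

/-- The `M`-truncation of a function `f`. -/
noncomputable def trunc (f : ℝ → ℝ) (M : ℝ) : ℝ → ℝ :=
  fun t => if |f t| ≤ M then f t else M * Real.sign (f t)

/-- A decreasing function `φ : (0,∞) → [0,1]` is `p`-gentle if
`M ^ (2 - p) * φ M ^ p → 0` as `M → ∞`. -/
def IsGentle (p : ℝ) (φ : ℝ → ℝ) : Prop :=
  AntitoneOn φ (Set.Ioi 0) ∧ (∀ M > (0:ℝ), φ M ∈ Set.Icc (0:ℝ) 1) ∧
    Filter.Tendsto (fun M : ℝ => M ^ (2 - p) * φ M ^ p) Filter.atTop (nhds 0)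

/-- `T` is gentle-narrow with gentle function `φ`: for every `ε > 0`, `M > 0` and
measurable `A ⊆ [0,1]` there is `x ∈ L_p(A)` with `‖x‖ = μ(A)^{1/p}`,
`‖x - x^M‖ ≤ φ(M) μ(A)^{1/p}` and `‖T x‖ ≤ ε`. -/
def GentleNarrowWith {X : Type*} [NormedAddCommGroup X] [NormedSpace ℝ X]
    (p : ℝ) [Fact (1 ≤ ENNReal.ofReal p)]
    (T : Lp ℝ (ENNReal.ofReal p) μ01 →L[ℝ] X) (φ : ℝ → ℝ) : Prop :=
  ∀ ε > (0:ℝ), ∀ M > (0:ℝ), ∀ A : Set ℝ, A ⊆ Set.Icc 0 1 → MeasurableSet A →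
    ∃ x : Lp ℝ (ENNReal.ofReal p) μ01,
      (∀ᵐ t ∂μ01, t ∉ A → x t = 0) ∧
      ‖x‖ = (μ01 A).toReal ^ (1 / p) ∧
      (eLpNorm (fun t => x t - trunc (⇑x) M t) (ENNReal.ofReal p) μ01).toReal
        ≤ φ M * (μ01 A).toReal ^ (1 / p) ∧
      ‖T x‖ ≤ ε

/-! ### Auxiliary material -/

instance : IsFiniteMeasure μ01 := by unfold μ01; infer_instance
instance : NullSingletonClass μ01 := by unfold μ01; infer_instance

/-- The pointwise truncation map. -/
noncomputable def psiTr (M : ℝ) (v : ℝ) : ℝ := if |v| ≤ M then v else M * Real.sign v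

lemma trunc_eq_psiTr (f : ℝ → ℝ) (M : ℝ) (t : ℝ) : trunc f M t = psiTr M (f t) := rfl

lemma psiTr_zero (M : ℝ) : psiTr M 0 = 0 := by
  unfold psiTr; split <;> simp

lemma psiTr_neg (M : ℝ) (v : ℝ) : psiTr M (-v) = - psiTr M v := by
  unfold psiTr; rw [abs_neg, Real.sign_neg]; split <;> ring

lemma abs_sub_psiTr_le (M : ℝ) (hM : 0 < M) (v : ℝ) : |v - psiTr M v| ≤ |v| := by
  unfold psiTr; split
  · simp
  · rename_i h
    push_neg at h
    rcases le_or_gt 0 v with hv | hv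
    · rw [Real.sign_of_pos (by rw [abs_of_nonneg hv] at h; linarith)]
      rw [abs_of_nonneg hv] at h ⊢
      rw [abs_of_nonneg (by linarith)]; linarith
    · rw [Real.sign_of_neg hv]
      rw [abs_of_neg hv] at h ⊢
      rw [abs_of_nonpos (by linarith)]; linarith

lemma abs_sub_psiTr_smul (M : ℝ) (θ v : ℝ) (hθ : θ = 1 ∨ θ = -1) :
    |θ * v - psiTr M (θ * v)| = |v - psiTr M v| := by
  rcases hθ with h | h <;> subst h
  · rw [one_mul]
  · rw [neg_one_mul, psiTr_neg, ← neg_sub', abs_neg]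

lemma psiTr_eq_clamp (M : ℝ) (hM : 0 ≤ M) : psiTr M = fun v => min M (max (-M) v) := by
  funext v
  unfold psiTr
  by_cases h : |v| ≤ M
  · rcases abs_le.mp h with ⟨h1, h2⟩
    rw [if_pos (abs_le.mpr ⟨h1, h2⟩), max_eq_right h1, min_eq_right h2]
  · rw [if_neg h]
    push_neg at h
    rcases le_or_gt 0 v with hv | hv
    · rw [abs_of_nonneg hv] at h
      rw [Real.sign_of_pos (lt_of_le_of_lt hM h), mul_one]
      rw [max_eq_right (by linarith), min_eq_left (by linarith)]
    · rw [abs_of_neg hv] at h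
      rw [Real.sign_of_neg hv, mul_neg_one]
      rw [max_eq_left (by linarith), min_eq_right (by linarith)]

lemma measurable_psiTr (M : ℝ) (hM : 0 ≤ M) : Measurable (psiTr M) := by
  rw [psiTr_eq_clamp M hM]
  exact measurable_const.min (measurable_const.max measurable_id)

lemma opp_signs_abs_add (S u : ℝ) (h : S * u ≤ 0) : |S + u| ≤ max |S| |u| := by
  have hm1 : S ≤ max |S| |u| := le_trans (le_abs_self S) (le_max_left _ _)
  have hm1' : -(max |S| |u|) ≤ S := by
    have := neg_abs_le S; have := le_max_left |S| |u|; linarith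
  have hm2 : u ≤ max |S| |u| := le_trans (le_abs_self u) (le_max_right _ _)
  have hm2' : -(max |S| |u|) ≤ u := by
    have := neg_abs_le u; have := le_max_right |S| |u|; linarith
  rcases le_or_gt 0 S with h1 | h1 <;> rcases le_or_gt 0 u with h2 | h2
  · have h0 : S * u = 0 := le_antisymm h (mul_nonneg h1 h2)
    rcases mul_eq_zero.mp h0 with h0 | h0
    · rw [h0, zero_add]; exact le_max_right _ _
    · rw [h0, add_zero]; exact le_max_left _ _
  · rw [abs_le]; constructor <;> linarith
  · rw [abs_le]; constructor <;> linarith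
  · nlinarith

lemma greedy_signs {ι : Type*} [DecidableEq ι] (a : ι → ℝ) (C : ℝ) (hC : 0 ≤ C) :
    ∀ (t : Finset ι), (∀ i ∈ t, |a i| ≤ C) →
      ∃ θ : ι → ℝ, (∀ i, θ i = 1 ∨ θ i = -1) ∧ |∑ i ∈ t, θ i * a i| ≤ C := by
  intro t
  induction t using Finset.induction_on with
  | empty => intro _; exact ⟨fun _ => 1, fun _ => Or.inl rfl, by simpa⟩
  | @insert i₀ t hi₀ ih =>
    intro hbd
    obtain ⟨θ, hθ, hS⟩ := ih (fun i hi => hbd i (Finset.mem_insert_of_mem hi))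
    set S := ∑ i ∈ t, θ i * a i with hSdef
    set θ₀ : ℝ := if S * a i₀ ≤ 0 then 1 else -1 with hθ₀def
    refine ⟨Function.update θ i₀ θ₀, ?_, ?_⟩
    · intro i
      by_cases h : i = i₀
      · subst h; rw [Function.update_self, hθ₀def]; split <;> simp
      · rw [Function.update_of_ne h]; exact hθ i
    · rw [Finset.sum_insert hi₀, Function.update_self]
      have hrest : ∑ i ∈ t, Function.update θ i₀ θ₀ i * a i = S := by
        apply Finset.sum_congr rfl
        intro i hi
        have hne : i ≠ i₀ := by rintro rfl; exact hi₀ hi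
        rw [Function.update_of_ne hne]
      rw [hrest]
      have hbd0 : |a i₀| ≤ C := hbd i₀ (Finset.mem_insert_self _ _)
      have key : |θ₀ * a i₀ + S| ≤ max |S| |a i₀| := by
        have hopp : S * (θ₀ * a i₀) ≤ 0 := by
          rw [hθ₀def]; split
          · rename_i hsa; rw [one_mul]; exact hsa
          · rename_i hsa; push_neg at hsa; nlinarith
        have hkey := opp_signs_abs_add S (θ₀ * a i₀) hopp
        have habs : |θ₀ * a i₀| = |a i₀| := by
          rw [hθ₀def]; split <;> simp
        rw [habs] at hkey
        rw [add_comm]; exact hkey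
      calc |θ₀ * a i₀ + S| ≤ max |S| |a i₀| := key
        _ ≤ C := max_le hS hbd0

lemma sum_apply_disjoint {n : ℕ} (v : Fin n → ℝ)
    (hdisj : ∀ i k, v i ≠ 0 → v k ≠ 0 → i = k)
    (χ : ℝ → ℝ≥0∞) (hχ : χ 0 = 0) :
    χ (∑ i, v i) = ∑ i, χ (v i) := by
  by_cases h : ∃ i, v i ≠ 0
  · obtain ⟨i₀, hi₀⟩ := h
    have h1 : ∑ i, v i = v i₀ :=
      Finset.sum_eq_single i₀ (fun b _ hb => by
        by_contra hvb
        exact hb (hdisj b i₀ hvb hi₀)) (by simp)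
    have h2 : ∑ i, χ (v i) = χ (v i₀) :=
      Finset.sum_eq_single i₀ (fun b _ hb => by
        by_contra hvb
        have hvb' : v b ≠ 0 := by
          intro h0; rw [h0, hχ] at hvb; exact hvb rfl
        exact hb (hdisj b i₀ hvb' hi₀)) (by simp)
    rw [h1, h2]
  · push_neg at h
    simp [h, hχ]

lemma μ01_null_Iic_neg_one : μ01 (Iic (-1:ℝ)) = 0 := by
  unfold μ01
  rw [Measure.restrict_apply measurableSet_Iic]
  convert measure_empty
  · ext t; simp only [mem_inter_iff, mem_Iic, mem_Icc, mem_empty_iff_false, iff_false]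
    rintro ⟨h1, h2, h3⟩; linarith
  · infer_instance

lemma μ01_null_Ioi_one : μ01 (Ioi (1:ℝ)) = 0 := by
  unfold μ01
  rw [Measure.restrict_apply measurableSet_Ioi]
  convert measure_empty
  · ext t; simp only [mem_inter_iff, mem_Ioi, mem_Icc, mem_empty_iff_false, iff_false]
    rintro ⟨h1, h2, h3⟩; linarith
  · infer_instance

lemma setIntegral_Iic_eq (f : ℝ → ℝ) (hf : Integrable f μ01) (s : ℝ) (hs : -1 ≤ s) :
    ∫ t in Iic s, f t ∂μ01 = ∫ t in (-1:ℝ)..s, f t ∂μ01 := by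
  rw [intervalIntegral.integral_of_le hs]
  have hunion : Iic (-1:ℝ) ∪ Ioc (-1) s = Iic s := Iic_union_Ioc_eq_Iic hs
  have hu := setIntegral_union (s := Iic (-1:ℝ)) (t := Ioc (-1:ℝ) s) (μ := μ01) (f := f)
    (Iic_disjoint_Ioc le_rfl) measurableSet_Ioc (hf.integrableOn) (hf.integrableOn)
  rw [hunion] at hu
  rw [hu]
  have h0 : ∫ t in Iic (-1:ℝ), f t ∂μ01 = 0 := by
    rw [Measure.restrict_eq_zero.mpr μ01_null_Iic_neg_one, integral_zero_measure]
  rw [h0, zero_add]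

lemma setIntegral_Iic_one (f : ℝ → ℝ) (hf : Integrable f μ01) :
    ∫ t in Iic (1:ℝ), f t ∂μ01 = ∫ t, f t ∂μ01 := by
  have hu := integral_add_compl measurableSet_Iic hf (μ := μ01) (s := Iic 1)
  have h0 : ∫ t in (Iic (1:ℝ))ᶜ, f t ∂μ01 = 0 := by
    rw [compl_Iic, Measure.restrict_eq_zero.mpr μ01_null_Ioi_one, integral_zero_measure]
  linarith [hu]

lemma exists_flip (f : ℝ → ℝ) (hf : Integrable f μ01) (S : ℝ)
    (hS : |S| ≤ |∫ t, f t ∂μ01|) :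
    ∃ r : ℝ, ∫ t, (Iic r).piecewise f (fun t => -f t) t ∂μ01 = -S := by
  set I := ∫ t, f t ∂μ01 with hI
  set V : ℝ → ℝ := fun s => ∫ t in (-1:ℝ)..s, f t ∂μ01 with hV
  have contV : Continuous V := by
    apply intervalIntegral.continuous_primitive
    intro a b; exact hf.intervalIntegrable
  have hV1 : V 1 = I := by
    rw [hV]; simp only
    rw [← setIntegral_Iic_eq f hf 1 (by norm_num), setIntegral_Iic_one f hf]
  have hVm1 : V (-1) = 0 := intervalIntegral.integral_same
  set c := (I - S) / 2 with hc
  have hmem : c ∈ uIcc (V (-1)) (V 1) := by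
    rw [hVm1, hV1]
    rcases abs_le.mp hS with ⟨h1, h2⟩
    rcases le_or_gt 0 I with h3 | h3
    · rw [abs_of_nonneg h3] at h1 h2
      exact mem_uIcc.mpr (Or.inl ⟨by rw [hc]; linarith, by rw [hc]; linarith⟩)
    · rw [abs_of_neg h3] at h1 h2
      exact mem_uIcc.mpr (Or.inr ⟨by rw [hc]; linarith, by rw [hc]; linarith⟩)
  obtain ⟨r, hr, hVr⟩ := intermediate_value_uIcc contV.continuousOn hmem
  have hrIcc : r ∈ Icc (-1:ℝ) 1 := by rwa [uIcc_of_le (by norm_num : (-1:ℝ) ≤ 1)] at hr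
  refine ⟨r, ?_⟩
  have hIic : ∫ t in Iic r, f t ∂μ01 = c := by
    rw [setIntegral_Iic_eq f hf r hrIcc.1]; exact hVr
  have hcompl : ∫ t in (Iic r)ᶜ, f t ∂μ01 = I - c := by
    have hu := integral_add_compl measurableSet_Iic hf (μ := μ01) (s := Iic r)
    rw [hIic] at hu; linarith
  rw [integral_piecewise (g := fun t => -f t) measurableSet_Iic hf.integrableOn
    hf.neg.integrableOn]
  rw [hIic, integral_neg, hcompl]
  rw [hc]; ring

lemma μ01_mono_toReal {X Y : Set ℝ} (h : X ⊆ Y) : (μ01 X).toReal ≤ (μ01 Y).toReal :=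
  ENNReal.toReal_mono (measure_ne_top _ _) (measure_mono h)

lemma exists_slice (A : Set ℝ) (hA : A ⊆ Icc 0 1) (hAm : MeasurableSet A) (c : ℝ)
    (hc0 : 0 ≤ c) (hc1 : c ≤ (μ01 A).toReal) :
    ∃ r ∈ Icc (-1:ℝ) 1, (μ01 (A ∩ Iic r)).toReal = c := by
  set F : ℝ → ℝ := fun s => (μ01 (A ∩ Iic s)).toReal with hF
  have hint : Integrable (A.indicator fun _ => (1:ℝ)) μ01 :=
    (integrable_const (1:ℝ)).indicator hAm
  set FP : ℝ → ℝ := fun s => ∫ t in (-1:ℝ)..s, A.indicator (fun _ => (1:ℝ)) t ∂μ01 with hFP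
  have contFP : Continuous FP := by
    apply intervalIntegral.continuous_primitive
    intro a b; exact hint.intervalIntegrable
  have heq : EqOn F FP (Icc (-1:ℝ) 1) := by
    intro s hs
    rw [hF, hFP]; simp only
    rw [← setIntegral_Iic_eq _ hint s hs.1, setIntegral_indicator hAm, setIntegral_const]
    have hcomm : Iic s ∩ A = A ∩ Iic s := inter_comm _ _
    rw [hcomm, smul_eq_mul, mul_one]; rfl
  have contF : ContinuousOn F (Icc (-1:ℝ) 1) := contFP.continuousOn.congr heq
  have hFm1 : F (-1) = 0 := by
    rw [hF]; simp only
    have hempty : A ∩ Iic (-1:ℝ) = ∅ := by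
      ext t; simp only [mem_inter_iff, mem_Iic, mem_empty_iff_false, iff_false]
      rintro ⟨ht, ht2⟩
      have := (hA ht).1; linarith
    rw [hempty]; simp
  have hF1 : F 1 = (μ01 A).toReal := by
    rw [hF]; simp only
    have hself : A ∩ Iic (1:ℝ) = A := by
      apply inter_eq_self_of_subset_left
      intro t ht; exact (hA ht).2
    rw [hself]
  have hIVT := intermediate_value_Icc (by norm_num : (-1:ℝ) ≤ 1) contF
  rw [hFm1, hF1] at hIVT
  obtain ⟨r, hr, hFr⟩ := hIVT ⟨hc0, hc1⟩
  exact ⟨r, hr, hFr⟩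

lemma exists_partition (A : Set ℝ) (hA : A ⊆ Icc 0 1) (hAm : MeasurableSet A)
    (n : ℕ) (hn : 0 < n) (ha : 0 < (μ01 A).toReal) :
    ∃ B : Fin n → Set ℝ, (∀ i, MeasurableSet (B i)) ∧ (∀ i, B i ⊆ A) ∧
      (∀ i k : Fin n, i ≠ k → B i ∩ B k = ∅) ∧
      (∀ i, (μ01 (B i)).toReal = (μ01 A).toReal / n) := by
  set a := (μ01 A).toReal with hadef
  set m := a / n with hmdef
  have hm : 0 < m := div_pos ha (by exact_mod_cast hn)
  have hs : ∀ k : ℕ, k ≤ n → ∃ r ∈ Icc (-1:ℝ) 1, (μ01 (A ∩ Iic r)).toReal = k * m := by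
    intro k hk
    apply exists_slice A hA hAm
    · positivity
    · rw [hmdef]
      rw [div_eq_mul_inv, ← mul_assoc]
      calc (k:ℝ) * a * (n:ℝ)⁻¹ ≤ (n:ℝ) * a * (n:ℝ)⁻¹ := by
            apply mul_le_mul_of_nonneg_right _ (by positivity)
            apply mul_le_mul_of_nonneg_right _ ha.le
            exact_mod_cast hk
        _ = a := by field_simp
  classical
  set s : ℕ → ℝ := fun k => if h : k ≤ n then (hs k h).choose else 0 with hsdef
  have hsval : ∀ k (h : k ≤ n), (μ01 (A ∩ Iic (s k))).toReal = k * m := by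
    intro k h
    rw [hsdef]; simp only [dif_pos h]
    exact (hs k h).choose_spec.2
  have hmono : ∀ k l : ℕ, k ≤ l → l ≤ n → s k ≤ s l := by
    intro k l hkl hl
    rcases eq_or_lt_of_le hkl with h | h
    · subst h; exact le_rfl
    · by_contra hc
      push_neg at hc
      have h1 : (μ01 (A ∩ Iic (s l))).toReal ≤ (μ01 (A ∩ Iic (s k))).toReal :=
        μ01_mono_toReal (inter_subset_inter_right A (Iic_subset_Iic.mpr hc.le))
      rw [hsval k (le_trans hkl hl), hsval l hl] at h1
      have hcast : (k:ℝ) < l := by exact_mod_cast h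
      nlinarith
  refine ⟨fun i => A ∩ Ioc (s i.val) (s (i.val + 1)), ?_, ?_, ?_, ?_⟩
  · intro i; exact hAm.inter measurableSet_Ioc
  · intro i; exact inter_subset_left
  · intro i k hik
    rcases lt_or_gt_of_ne (fun h : i.val = k.val => hik (Fin.ext h)) with h | h
    · ext t
      simp only [mem_inter_iff, mem_Ioc, mem_empty_iff_false, iff_false]
      rintro ⟨⟨_, _, h2⟩, _, h3, _⟩
      have hle : s (i.val + 1) ≤ s k.val := hmono _ _ h (le_of_lt k.isLt)
      linarith
    · ext t
      simp only [mem_inter_iff, mem_Ioc, mem_empty_iff_false, iff_false]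
      rintro ⟨⟨_, h3, _⟩, _, _, h2⟩
      have hle : s (k.val + 1) ≤ s i.val := hmono _ _ h (le_of_lt i.isLt)
      linarith
  · intro i
    simp only
    have hsub : A ∩ Iic (s i.val) ⊆ A ∩ Iic (s (i.val + 1)) :=
      inter_subset_inter_right A (Iic_subset_Iic.mpr (hmono _ _ (Nat.le_succ _) i.isLt))
    have hseteq : A ∩ Ioc (s i.val) (s (i.val + 1))
        = (A ∩ Iic (s (i.val + 1))) \ (A ∩ Iic (s i.val)) := by
      ext t
      simp only [mem_inter_iff, mem_Ioc, mem_diff, mem_Iic]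
      constructor
      · rintro ⟨ht, h1, h2⟩
        exact ⟨⟨ht, h2⟩, fun hh => absurd (hh.2) (not_le.mpr h1)⟩
      · rintro ⟨⟨ht, h2⟩, hh⟩
        refine ⟨ht, ?_, h2⟩
        by_contra hc
        push_neg at hc
        exact hh ⟨ht, hc⟩
    rw [hseteq, measure_diff hsub ((hAm.inter measurableSet_Iic).nullMeasurableSet)
      (measure_ne_top _ _)]
    rw [ENNReal.toReal_sub_of_le (measure_mono hsub) (measure_ne_top _ _)]
    rw [hsval (i.val+1) (Nat.succ_le_of_lt i.isLt), hsval i.val (le_of_lt i.isLt)]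
    push_cast
    ring

lemma coeFn_finset_sum {p' : ℝ≥0∞} [Fact (1 ≤ p')] {ι : Type*} (t : Finset ι)
    (z : ι → Lp ℝ p' μ01) :
    ⇑(∑ i ∈ t, z i) =ᵐ[μ01] fun a => ∑ i ∈ t, z i a := by
  classical
  induction t using Finset.induction_on with
  | empty => simpa [Pi.zero_def] using Lp.coeFn_zero (E := ℝ) (p := p') (μ := μ01)
  | @insert i₀ t hi₀ ih =>
    rw [Finset.sum_insert hi₀]
    filter_upwards [Lp.coeFn_add (z i₀) (∑ i ∈ t, z i), ih] with a h1 h2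
    rw [h1]
    simp only [Pi.add_apply, h2, Finset.sum_insert hi₀]

/-- Lemma: if `1 < p ≤ 2` and `T : L_p → X` is gentle-narrow with `p`-gentle function `φ`,
then the witness `x` can in addition be chosen of mean zero. -/
theorem gentle_narrow_mean_zero {X : Type*} [NormedAddCommGroup X] [NormedSpace ℝ X]
    [CompleteSpace X]
    (p : ℝ) (hp1 : 1 < p) (hp2 : p ≤ 2) [Fact (1 ≤ ENNReal.ofReal p)]
    (T : Lp ℝ (ENNReal.ofReal p) μ01 →L[ℝ] X)
    (φ : ℝ → ℝ) (hφ : IsGentle p φ) (hT : GentleNarrowWith p T φ) :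
    ∀ ε > (0:ℝ), ∀ M > (0:ℝ), ∀ A : Set ℝ, A ⊆ Set.Icc 0 1 → MeasurableSet A →
      ∃ x : Lp ℝ (ENNReal.ofReal p) μ01,
        (∀ᵐ t ∂μ01, t ∉ A → x t = 0) ∧
        ‖x‖ = (μ01 A).toReal ^ (1 / p) ∧
        (eLpNorm (fun t => x t - trunc (⇑x) M t) (ENNReal.ofReal p) μ01).toReal
          ≤ φ M * (μ01 A).toReal ^ (1 / p) ∧
        ‖T x‖ ≤ ε ∧
        (∫ t, x t ∂μ01) = 0 := by
  classical
  intro ε hε M hM A hA hAm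
  have hp0 : (0:ℝ) < p := lt_trans one_pos hp1
  set p' : ℝ≥0∞ := ENNReal.ofReal p with hp'def
  have hp'ne0 : p' ≠ 0 := by
    rw [hp'def]
    simp only [ne_eq, ENNReal.ofReal_eq_zero, not_le]
    exact hp0
  have hp'net : p' ≠ ⊤ := ENNReal.ofReal_ne_top
  have hp'toReal : p'.toReal = p := ENNReal.toReal_ofReal hp0.le
  by_cases hanull : (μ01 A).toReal = 0
  · -- trivial case : `x = 0` works
    refine ⟨0, ?_, ?_, ?_, ?_, ?_⟩
    · filter_upwards [Lp.coeFn_zero (E := ℝ) (p := p') (μ := μ01)] with t ht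
      intro _; exact ht
    · rw [norm_zero, hanull, Real.zero_rpow (one_div_ne_zero (ne_of_gt hp0))]
    · have hz : (fun t => (0 : Lp ℝ p' μ01) t - trunc (⇑(0 : Lp ℝ p' μ01)) M t)
          =ᵐ[μ01] (fun _ => (0:ℝ)) := by
        filter_upwards [Lp.coeFn_zero (E := ℝ) (p := p') (μ := μ01)] with t ht
        rw [trunc_eq_psiTr, ht]
        simp only [Pi.zero_apply]
        rw [psiTr_zero, sub_zero]
      rw [eLpNorm_congr_ae hz, eLpNorm_zero', ENNReal.toReal_zero, hanull]
      rw [Real.zero_rpow (one_div_ne_zero (ne_of_gt hp0)), mul_zero]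
    · rw [map_zero, norm_zero]; exact hε.le
    · have hz : (⇑(0 : Lp ℝ p' μ01)) =ᵐ[μ01] (fun _ => (0:ℝ)) := by
        filter_upwards [Lp.coeFn_zero (E := ℝ) (p := p') (μ := μ01)] with t ht
        exact ht
      rw [integral_congr_ae hz, integral_zero]
  · -- main case
    set a := (μ01 A).toReal with hadef
    have ha : 0 < a := lt_of_le_of_ne ENNReal.toReal_nonneg (Ne.symm hanull)
    -- choose n
    set b := ε / (2 * (‖T‖ + 1)) with hbdef
    have hTnorm : (0:ℝ) ≤ ‖T‖ := norm_nonneg _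
    have hb : 0 < b := by
      apply div_pos hε; positivity
    set δ := b ^ p with hδdef
    have hδ : 0 < δ := Real.rpow_pos_of_pos hb p
    obtain ⟨n, hn⟩ := exists_nat_gt (a / δ)
    have hnpos : 0 < n := by
      have h1 : (0:ℝ) < a / δ := div_pos ha hδ
      exact_mod_cast lt_trans h1 hn
    have hnR : (0:ℝ) < n := by exact_mod_cast hnpos
    set m := a / n with hmdef
    have hm : 0 < m := div_pos ha hnR
    have hmδ : m ≤ δ := by
      rw [hmdef, div_le_iff₀ hnR]
      rw [div_lt_iff₀ hδ] at hn
      nlinarith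
    have hTm : ‖T‖ * m ^ (1/p) ≤ ε / 2 := by
      have h1 : m ^ (1/p) ≤ δ ^ (1/p) := Real.rpow_le_rpow hm.le hmδ (by positivity)
      have h2 : δ ^ (1/p) = b := by
        rw [hδdef, ← Real.rpow_mul hb.le, mul_one_div_cancel (ne_of_gt hp0), Real.rpow_one]
      rw [h2] at h1
      have h3 : ‖T‖ * m ^ (1/p) ≤ ‖T‖ * b := mul_le_mul_of_nonneg_left h1 hTnorm
      have h4 : ‖T‖ * b ≤ (‖T‖ + 1) * b := by nlinarith
      have h5 : (‖T‖ + 1) * b = ε / 2 := by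
        rw [hbdef]; field_simp
      linarith
    -- partition of A into n pieces of equal measure
    obtain ⟨B, hBmeas, hBsub, hBdisj, hBm⟩ := exists_partition A hA hAm n hnpos ha
    -- apply gentle-narrowness on each piece
    have hx : ∀ i : Fin n, ∃ x : Lp ℝ p' μ01,
        (∀ᵐ t ∂μ01, t ∉ B i → x t = 0) ∧
        ‖x‖ = (μ01 (B i)).toReal ^ (1 / p) ∧
        (eLpNorm (fun t => x t - trunc (⇑x) M t) p' μ01).toReal
          ≤ φ M * (μ01 (B i)).toReal ^ (1 / p) ∧
        ‖T x‖ ≤ ε / (2 * n) := by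
      intro i
      exact hT (ε / (2 * n)) (by positivity) M hM (B i)
        (subset_trans (hBsub i) hA) (hBmeas i)
    choose x hx1 hx2 hx3 hx4 using hx
    set f : Fin n → ℝ → ℝ := fun i => ⇑(x i) with hfdef
    have hfmeas : ∀ i, StronglyMeasurable (f i) := fun i => Lp.stronglyMeasurable (x i)
    have hfLp : ∀ i, eLpNorm (f i) p' μ01 < ⊤ := fun i => Lp.eLpNorm_lt_top (x i)
    have hone_le : (1:ℝ≥0∞) ≤ p' := Fact.out
    have hInt : ∀ i, Integrable (f i) μ01 := fun i => (Lp.memLp (x i)).integrable hone_le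
    have hx1' : ∀ i, ∀ᵐ t ∂μ01, t ∉ B i → f i t = 0 := hx1
    have hx3' : ∀ i, (eLpNorm (fun t => f i t - psiTr M (f i t)) p' μ01).toReal
        ≤ φ M * m ^ (1/p) := by
      intro i
      have hx3i := hx3 i
      rw [hBm i] at hx3i
      exact hx3i
    set I : Fin n → ℝ := fun i => ∫ t, f i t ∂μ01 with hIdef
    -- the piece with the largest integral
    obtain ⟨j, -, hj⟩ := Finset.exists_max_image Finset.univ (fun i => |I i|)
      ⟨⟨0, hnpos⟩, Finset.mem_univ _⟩
    -- greedy signs on the other pieces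
    obtain ⟨θ, hθ, hSbd⟩ := greedy_signs I |I j| (abs_nonneg _) (Finset.univ.erase j)
      (fun i _ => hj i (Finset.mem_univ _))
    set S := ∑ i ∈ Finset.univ.erase j, θ i * I i with hSdef
    -- flip the piece j to get integral -S
    obtain ⟨r, hr⟩ := exists_flip (f j) (hInt j) S hSbd
    set h : ℝ → ℝ := (Iic r).piecewise (f j) (fun t => -f j t) with hhdef
    have hhval : ∀ t, h t = f j t ∨ h t = -f j t := by
      intro t
      by_cases hmem : t ∈ Iic r
      · left; rw [hhdef, Set.piecewise_eq_of_mem _ _ _ hmem]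
      · right; rw [hhdef, Set.piecewise_eq_of_notMem _ _ _ hmem]
    have hhnorm : ∀ t, ‖h t‖ = ‖f j t‖ := by
      intro t
      rcases hhval t with he | he <;> rw [he] <;> simp
    have hhmeas : StronglyMeasurable h :=
      (hfmeas j).piecewise measurableSet_Iic (hfmeas j).neg
    have hhint : Integrable h μ01 :=
      Integrable.piecewise (g := fun t => -f j t) measurableSet_Iic
        (hInt j).integrableOn (hInt j).neg.integrableOn
    have hhLp : MemLp h p' μ01 := by
      refine ⟨hhmeas.aestronglyMeasurable, ?_⟩
      have hle : eLpNorm h p' μ01 ≤ eLpNorm (f j) p' μ01 :=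
        eLpNorm_mono (fun t => (hhnorm t).le)
      exact lt_of_le_of_lt hle (hfLp j)
    set y : Lp ℝ p' μ01 := hhLp.toLp h with hydef
    -- the final element
    set xt : Lp ℝ p' μ01 := (∑ i ∈ Finset.univ.erase j, θ i • x i) + y with hxtdef
    -- the pointwise model of xt
    set w : Fin n → ℝ → ℝ := fun i t => if i = j then h t else θ i * f i t with hwdef
    set g : Fin n → ℝ → ℝ := fun i => (B i).indicator (w i) with hgdef
    set G : ℝ → ℝ := fun t => ∑ i, g i t with hGdef
    have hgj : g j = (B j).indicator h := by
      funext t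
      simp only [hgdef, hwdef, Set.indicator_apply, eq_self_iff_true, if_true]
    have hgne : ∀ i, i ≠ j → g i = (B i).indicator (fun t => θ i * f i t) := by
      intro i hi
      funext t
      simp only [hgdef, hwdef, Set.indicator_apply, if_neg hi]
    have hgmeas : ∀ i, StronglyMeasurable (g i) := by
      intro i
      by_cases hij : i = j
      · subst hij; rw [hgj]; exact hhmeas.indicator (hBmeas i)
      · rw [hgne i hij]
        exact (((hfmeas i).const_mul (θ i))).indicator (hBmeas i)
    -- pointwise support facts
    have hg_supp : ∀ i t, g i t ≠ 0 → t ∈ B i := by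
      intro i t hgt
      by_contra hmem
      rw [hgdef] at hgt
      exact hgt (Set.indicator_of_notMem hmem _)
    have hg_disj : ∀ t, ∀ i k, g i t ≠ 0 → g k t ≠ 0 → i = k := by
      intro t i k hi hk
      by_contra hik
      have := hBdisj i k hik
      have ht : t ∈ B i ∩ B k := ⟨hg_supp i t hi, hg_supp k t hk⟩
      rw [this] at ht
      exact ht
    -- a.e. facts
    have hae_all : ∀ᵐ t ∂μ01, ∀ i : Fin n, t ∉ B i → f i t = 0 := ae_all_iff.mpr hx1'
    -- h vanishes where f j vanishes
    have hh_zero : ∀ t, f j t = 0 → h t = 0 := by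
      intro t ht
      rcases hhval t with he | he <;> rw [he, ht]; ring
    -- coercion of xt agrees a.e. with G
    have hcoe : ⇑xt =ᵐ[μ01] G := by
      have hadd := Lp.coeFn_add (∑ i ∈ Finset.univ.erase j, θ i • x i) y
      have hsum := coeFn_finset_sum (Finset.univ.erase j) (fun i => θ i • x i)
      have hy := MemLp.coeFn_toLp hhLp
      have hsmul : ∀ᵐ t ∂μ01, ∀ i : Fin n, (θ i • x i) t = θ i * f i t :=
        ae_all_iff.mpr (fun i => by
          filter_upwards [Lp.coeFn_smul (θ i) (x i)] with t ht
          rw [ht, Pi.smul_apply, smul_eq_mul])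
      filter_upwards [hadd, hsum, hy, hsmul, hae_all] with t h1 h2 h3 h4 h5
      rw [hxtdef]
      rw [h1, Pi.add_apply, h2, h3]
      have hterm : ∀ i ∈ Finset.univ.erase j, g i t = θ i * f i t := by
        intro i hi
        have hij : i ≠ j := Finset.ne_of_mem_erase hi
        rw [hgne i hij]
        by_cases hmem : t ∈ B i
        · rw [Set.indicator_of_mem hmem]
        · rw [Set.indicator_of_notMem hmem, h5 i hmem, mul_zero]
      have htermj : g j t = h t := by
        rw [hgj]
        by_cases hmem : t ∈ B j
        · rw [Set.indicator_of_mem hmem]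
        · rw [Set.indicator_of_notMem hmem, hh_zero t (h5 j hmem)]
      rw [hGdef]
      simp only
      rw [← Finset.sum_erase_add _ _ (Finset.mem_univ j), htermj]
      congr 1
      · apply Finset.sum_congr rfl
        intro i hi
        rw [h4 i, hterm i hi]
    -- lintegral machinery
    set L : (ℝ → ℝ) → ℝ≥0∞ := fun u => ∫⁻ t, (‖u t‖₊ : ℝ≥0∞) ^ p ∂μ01 with hLdef
    have heLp_eq : ∀ u : ℝ → ℝ, eLpNorm u p' μ01 = (L u) ^ (1/p) := by
      intro u
      rw [eLpNorm_eq_lintegral_rpow_enorm_toReal hp'ne0 hp'net, hp'toReal]; rfl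
    have hL_of_eLp : ∀ u : ℝ → ℝ, L u = (eLpNorm u p' μ01) ^ p := by
      intro u
      rw [heLp_eq, ← ENNReal.rpow_mul, one_div_mul_cancel (ne_of_gt hp0), ENNReal.rpow_one]
    have hLf : ∀ i, L (f i) = ENNReal.ofReal m := by
      intro i
      have hnorm : (eLpNorm (f i) p' μ01).toReal = m ^ (1/p) := by
        rw [← Lp.norm_def, hx2 i, hBm i]
      have heq : eLpNorm (f i) p' μ01 = ENNReal.ofReal (m ^ (1/p)) := by
        rw [← hnorm, ENNReal.ofReal_toReal (hfLp i).ne]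
      rw [hL_of_eLp, heq, ENNReal.ofReal_rpow_of_nonneg (by positivity) hp0.le,
        ← Real.rpow_mul hm.le, one_div_mul_cancel (ne_of_gt hp0), Real.rpow_one]
    have hg_normae : ∀ i, ∀ᵐ t ∂μ01, ‖g i t‖ = ‖f i t‖ := by
      intro i
      filter_upwards [hx1' i] with t ht
      by_cases hmem : t ∈ B i
      · by_cases hij : i = j
        · rw [hij] at hmem ⊢
          rw [hgj, Set.indicator_of_mem hmem]
          exact hhnorm t
        · rw [hgne i hij, Set.indicator_of_mem hmem, norm_mul]
          have hone : ‖θ i‖ = 1 := by rcases hθ i with he | he <;> rw [he] <;> simp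
          rw [hone, one_mul]
      · have hzero : g i t = 0 := by
          by_contra hne
          exact hmem (hg_supp i t hne)
        rw [hzero, ht hmem]
    have hLg : ∀ i, L (g i) = ENNReal.ofReal m := by
      intro i
      rw [← hLf i, hLdef]
      apply lintegral_congr_ae
      filter_upwards [hg_normae i] with t ht
      have hnn : ‖g i t‖₊ = ‖f i t‖₊ :=
        NNReal.coe_injective (by rw [coe_nnnorm, coe_nnnorm, ht])
      rw [hnn]
    have hLG : L G = ENNReal.ofReal a := by
      have hpoint : ∀ t, (‖G t‖₊ : ℝ≥0∞) ^ p = ∑ i, (‖g i t‖₊ : ℝ≥0∞) ^ p := by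
        intro t
        have hsad := sum_apply_disjoint (fun i => g i t) (hg_disj t)
          (fun v => (‖v‖₊ : ℝ≥0∞) ^ p)
          (by simp [ENNReal.zero_rpow_of_pos hp0])
        simpa [hGdef] using hsad
      calc L G = ∫⁻ t, ∑ i, (‖g i t‖₊ : ℝ≥0∞) ^ p ∂μ01 := by
            rw [hLdef]
            exact lintegral_congr (fun t => hpoint t)
        _ = ∑ i, ∫⁻ t, (‖g i t‖₊ : ℝ≥0∞) ^ p ∂μ01 :=
            lintegral_finset_sum _ (fun i _ => ((hgmeas i).measurable.enorm).pow_const p)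
        _ = ∑ _i : Fin n, ENNReal.ofReal m :=
            Finset.sum_congr rfl (fun i _ => hLg i)
        _ = n • ENNReal.ofReal m := by
            rw [Finset.sum_const, Finset.card_univ, Fintype.card_fin]
        _ = ENNReal.ofReal a := by
            rw [nsmul_eq_mul, ← ENNReal.ofReal_natCast n,
              ← ENNReal.ofReal_mul (Nat.cast_nonneg n)]
            congr 1
            rw [hmdef]
            field_simp
    -- (i) norm equality
    have hnormG : ‖xt‖ = a ^ (1/p) := by
      rw [Lp.norm_def, eLpNorm_congr_ae hcoe, heLp_eq, hLG, ← ENNReal.toReal_rpow,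
        ENNReal.toReal_ofReal ha.le]
    -- (ii) truncation bound
    have hφ0 : 0 ≤ φ M := (hφ.2.1 M hM).1
    have htrunc : (eLpNorm (fun t => xt t - trunc (⇑xt) M t) p' μ01).toReal
        ≤ φ M * a ^ (1/p) := by
      have hcongr : (fun t => xt t - trunc (⇑xt) M t)
          =ᵐ[μ01] (fun t => G t - psiTr M (G t)) := by
        filter_upwards [hcoe] with t ht
        rw [trunc_eq_psiTr, ht]
      rw [eLpNorm_congr_ae hcongr]
      set Dg : Fin n → ℝ → ℝ := fun i t => g i t - psiTr M (g i t) with hDgdef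
      have hsplit : ∀ t, (‖G t - psiTr M (G t)‖₊ : ℝ≥0∞) ^ p
          = ∑ i, (‖Dg i t‖₊ : ℝ≥0∞) ^ p := by
        intro t
        have hsad := sum_apply_disjoint (fun i => g i t) (hg_disj t)
          (fun v => (‖v - psiTr M v‖₊ : ℝ≥0∞) ^ p)
          (by simp [psiTr_zero, ENNReal.zero_rpow_of_pos hp0])
        simpa [hGdef, hDgdef] using hsad
      have hdom : ∀ i t, ‖Dg i t‖ ≤ ‖f i t - psiTr M (f i t)‖ := by
        intro i t
        rw [hDgdef]
        simp only
        by_cases hmem : t ∈ B i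
        · by_cases hij : i = j
          · rw [hij] at hmem ⊢
            rw [hgj, Set.indicator_of_mem hmem]
            rcases hhval t with he | he
            · rw [he]
            · rw [he]
              have hsmul2 := abs_sub_psiTr_smul M (-1) (f j t) (Or.inr rfl)
              rw [neg_one_mul] at hsmul2
              rw [Real.norm_eq_abs, Real.norm_eq_abs, hsmul2]
          · rw [hgne i hij, Set.indicator_of_mem hmem]
            have hsmul2 := abs_sub_psiTr_smul M (θ i) (f i t) (hθ i)
            rw [Real.norm_eq_abs, Real.norm_eq_abs, hsmul2]
        · have hzero : g i t = 0 := by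
            by_contra hne
            exact hmem (hg_supp i t hne)
          rw [hzero, psiTr_zero, sub_zero, norm_zero]
          exact norm_nonneg _
      have hpiece : ∀ i, (∫⁻ t, (‖Dg i t‖₊ : ℝ≥0∞) ^ p ∂μ01)
          ≤ ENNReal.ofReal (φ M ^ p * m) := by
        intro i
        have hflt : eLpNorm (fun t => f i t - psiTr M (f i t)) p' μ01 < ⊤ := by
          apply lt_of_le_of_lt (eLpNorm_mono (fun t => ?_)) (hfLp i)
          rw [Real.norm_eq_abs, Real.norm_eq_abs]
          exact abs_sub_psiTr_le M hM _
        have hbd : eLpNorm (fun t => f i t - psiTr M (f i t)) p' μ01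
            ≤ ENNReal.ofReal (φ M * m ^ (1/p)) := by
          rw [ENNReal.le_ofReal_iff_toReal_le hflt.ne (by positivity)]
          exact hx3' i
        have hchain1 : L (fun t => f i t - psiTr M (f i t))
            ≤ (ENNReal.ofReal (φ M * m ^ (1/p))) ^ p := by
          rw [hL_of_eLp]
          exact ENNReal.rpow_le_rpow hbd hp0.le
        have hchain2 : (ENNReal.ofReal (φ M * m ^ (1/p))) ^ p
            = ENNReal.ofReal (φ M ^ p * m) := by
          rw [ENNReal.ofReal_rpow_of_nonneg (by positivity) hp0.le]
          congr 1
          rw [Real.mul_rpow hφ0 (by positivity), ← Real.rpow_mul hm.le,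
            one_div_mul_cancel (ne_of_gt hp0), Real.rpow_one]
        calc ∫⁻ t, (‖Dg i t‖₊ : ℝ≥0∞) ^ p ∂μ01
            ≤ L (fun t => f i t - psiTr M (f i t)) := by
              rw [hLdef]
              apply lintegral_mono
              intro t
              apply ENNReal.rpow_le_rpow _ hp0.le
              exact ENNReal.coe_le_coe.mpr
                (by rw [← NNReal.coe_le_coe, coe_nnnorm, coe_nnnorm]; exact hdom i t)
          _ ≤ _ := le_trans hchain1 (le_of_eq hchain2)
      have hsum : L (fun t => G t - psiTr M (G t)) ≤ ENNReal.ofReal (φ M ^ p * a) := by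
        calc L (fun t => G t - psiTr M (G t))
            = ∑ i, ∫⁻ t, (‖Dg i t‖₊ : ℝ≥0∞) ^ p ∂μ01 := by
              simp only [hLdef]
              rw [lintegral_congr (fun t => hsplit t)]
              exact lintegral_finset_sum _ (fun i _ => by
                apply Measurable.pow_const
                apply Measurable.enorm (f := Dg i)
                exact ((hgmeas i).measurable.sub
                  ((measurable_psiTr M hM.le).comp (hgmeas i).measurable)))
          _ ≤ ∑ _i : Fin n, ENNReal.ofReal (φ M ^ p * m) :=
              Finset.sum_le_sum (fun i _ => hpiece i)
          _ = n • ENNReal.ofReal (φ M ^ p * m) := by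
              rw [Finset.sum_const, Finset.card_univ, Fintype.card_fin]
          _ = ENNReal.ofReal (φ M ^ p * a) := by
              rw [nsmul_eq_mul, ← ENNReal.ofReal_natCast n,
                ← ENNReal.ofReal_mul (Nat.cast_nonneg n)]
              congr 1
              rw [hmdef]
              field_simp
      have hfinal : eLpNorm (fun t => G t - psiTr M (G t)) p' μ01
          ≤ ENNReal.ofReal (φ M * a ^ (1/p)) := by
        rw [heLp_eq]
        calc (L (fun t => G t - psiTr M (G t))) ^ (1/p)
            ≤ (ENNReal.ofReal (φ M ^ p * a)) ^ (1/p) :=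
              ENNReal.rpow_le_rpow hsum (by positivity)
          _ = ENNReal.ofReal (φ M * a ^ (1/p)) := by
              rw [ENNReal.ofReal_rpow_of_nonneg (by positivity) (by positivity)]
              congr 1
              rw [Real.mul_rpow (by positivity) ha.le, ← Real.rpow_mul hφ0,
                mul_one_div_cancel (ne_of_gt hp0), Real.rpow_one]
      calc (eLpNorm (fun t => G t - psiTr M (G t)) p' μ01).toReal
          ≤ (ENNReal.ofReal (φ M * a ^ (1/p))).toReal :=
            ENNReal.toReal_mono ENNReal.ofReal_ne_top hfinal
        _ = φ M * a ^ (1/p) := ENNReal.toReal_ofReal (by positivity)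
    -- (iii) bound on ‖T xt‖
    have hTbound : ‖T xt‖ ≤ ε := by
      have hTy : ‖T y‖ ≤ ε/2 := by
        have hny : ‖y‖ = m ^ (1/p) := by
          rw [hydef, Lp.norm_toLp]
          have hee : eLpNorm h p' μ01 = eLpNorm (f j) p' μ01 :=
            le_antisymm (eLpNorm_mono fun t => (hhnorm t).le)
              (eLpNorm_mono fun t => (hhnorm t).ge)
          rw [hee, ← Lp.norm_def, hx2 j, hBm j]
        calc ‖T y‖ ≤ ‖T‖ * ‖y‖ := T.le_opNorm y
          _ = ‖T‖ * m ^ (1/p) := by rw [hny]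
          _ ≤ ε/2 := hTm
      have hTsum : ‖T (∑ i ∈ Finset.univ.erase j, θ i • x i)‖ ≤ ε/2 := by
        rw [map_sum]
        have hcard : ((Finset.univ.erase j).card : ℝ) ≤ n := by
          have hc := Finset.card_le_card (Finset.erase_subset j (Finset.univ : Finset (Fin n)))
          rw [Finset.card_univ, Fintype.card_fin] at hc
          exact_mod_cast hc
        calc ‖∑ i ∈ Finset.univ.erase j, T (θ i • x i)‖
            ≤ ∑ i ∈ Finset.univ.erase j, ‖T (θ i • x i)‖ := norm_sum_le _ _
          _ ≤ ∑ _i ∈ Finset.univ.erase j, (ε / (2*n)) := by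
              apply Finset.sum_le_sum
              intro i _
              rw [_root_.map_smul, norm_smul]
              have hone : ‖θ i‖ = 1 := by rcases hθ i with he | he <;> rw [he] <;> simp
              rw [hone, one_mul]
              exact hx4 i
          _ = (Finset.univ.erase j).card * (ε / (2*n)) := by
              rw [Finset.sum_const, nsmul_eq_mul]
          _ ≤ n * (ε / (2*n)) := by
              apply mul_le_mul_of_nonneg_right hcard (by positivity)
          _ = ε/2 := by field_simp
      calc ‖T xt‖ = ‖T (∑ i ∈ Finset.univ.erase j, θ i • x i) + T y‖ := by
            rw [hxtdef, map_add]
        _ ≤ ‖T (∑ i ∈ Finset.univ.erase j, θ i • x i)‖ + ‖T y‖ := norm_add_le _ _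
        _ ≤ ε/2 + ε/2 := add_le_add hTsum hTy
        _ = ε := by ring
    -- (iv) a.e. vanishing outside A
    have hvanish : ∀ᵐ t ∂μ01, t ∉ A → xt t = 0 := by
      filter_upwards [hcoe] with t ht hA'
      rw [ht, hGdef]
      simp only
      apply Finset.sum_eq_zero
      intro i _
      by_contra hne
      exact hA' (hBsub i (hg_supp i t hne))
    -- (v) mean zero
    have hIxt : ∫ t, xt t ∂μ01 = 0 := by
      rw [integral_congr_ae hcoe]
      have hgInt : ∀ i : Fin n, Integrable (g i) μ01 := by
        intro i
        by_cases hij : i = j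
        · rw [hij, hgj]
          exact hhint.indicator (hBmeas j)
        · rw [hgne i hij]
          exact ((hInt i).const_mul (θ i)).indicator (hBmeas i)
      have hGint : ∫ t, G t ∂μ01 = ∑ i, ∫ t, g i t ∂μ01 := by
        rw [hGdef]
        exact integral_finset_sum _ (fun i _ => hgInt i)
      rw [hGint]
      have hIBi : ∀ i, ∫ t in B i, f i t ∂μ01 = I i := by
        intro i
        have hfi : f i =ᵐ[μ01] (B i).indicator (f i) := by
          filter_upwards [hx1' i] with t ht
          by_cases hmem : t ∈ B i
          · rw [Set.indicator_of_mem hmem]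
          · rw [Set.indicator_of_notMem hmem, ht hmem]
        rw [hIdef]
        simp only
        rw [integral_congr_ae hfi, integral_indicator (hBmeas i)]
      have hIg : ∀ i, i ≠ j → ∫ t, g i t ∂μ01 = θ i * I i := by
        intro i hij
        rw [hgne i hij, integral_indicator (hBmeas i), integral_const_mul, hIBi i]
      have hIgj : ∫ t, g j t ∂μ01 = -S := by
        have hfj : h =ᵐ[μ01] (B j).indicator h := by
          filter_upwards [hx1' j] with t ht
          by_cases hmem : t ∈ B j
          · rw [Set.indicator_of_mem hmem]
          · rw [Set.indicator_of_notMem hmem, hh_zero t (ht hmem)]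
        rw [hgj, ← integral_congr_ae hfj]
        exact hr
      rw [← Finset.sum_erase_add _ _ (Finset.mem_univ j), hIgj]
      have hsumS : ∑ i ∈ Finset.univ.erase j, ∫ t, g i t ∂μ01 = S := by
        rw [hSdef]
        apply Finset.sum_congr rfl
        intro i hi
        exact hIg i (Finset.ne_of_mem_erase hi)
      rw [hsumS]
      ring
    exact ⟨xt, hvanish, hnormG, htrunc, hTbound, hIxt⟩
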